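/- Under the breadth-first delegation rule, if a delegating voter k is assigned her guru through a delegation chain C_k that contains another delegating voter j, then k is assigned the same guru as j. -/

import Mathlib

/-- A delegation graph: voters are partitioned into casting, delegating and
abstaining (neither) voters; `weight a b = some x` iff delegating voter `a`
ranks `b` at position `x`. -/
structure DelGraph (V : Type) where
  cast : V → Prop
  deleg : V → Prop
  weight : V → V → Option ℕ

namespace DelGraph

variable {V : Type}

/-- Edge of the delegation graph. -/
def Edge (G : DelGraph V) (a b : V) : Prop := G.weight a b ≠ none

/-- The weight sequence of a chain. -/
def weights (G : DelGraph V) (c : List V) : List ℕ :=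
  (c.zip c.tail).map fun p => (G.weight p.1 p.2).getD 0

/-- A delegation chain for `i` : a repetition-free directed path starting at
the delegating voter `i` and ending at a casting voter. -/
def IsChain (G : DelGraph V) (i : V) (c : List V) : Prop :=
  c.head? = some i ∧ G.deleg i ∧ c.Nodup ∧ List.Chain' G.Edge c ∧
    ∃ j, c.getLast? = some j ∧ G.cast j

/-- Lexicographic (strict) order on weight sequences. -/
def LexLt (u v : List ℕ) : Prop := List.Lex (· < ·) u v

/-- Depth-first delegation: the selected chain has lexicographically minimal
weight sequence. -/
def DFSelect (G : DelGraph V) (i : V) (c : List V) : Prop :=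
  G.IsChain i c ∧ ∀ c', G.IsChain i c' → ¬ LexLt (G.weights c') (G.weights c)

/-- `j` is the guru assigned to `i` by the depth-first delegation rule. -/
def DFGuru (G : DelGraph V) (i j : V) : Prop :=
  ∃ c, G.DFSelect i c ∧ c.getLast? = some j

/-- Breadth-first comparison: shorter length first, lexicographically smaller
weight sequence among equal-length chains. -/
def BFLt (G : DelGraph V) (c' c : List V) : Prop :=
  c'.length < c.length ∨
    (c'.length = c.length ∧ LexLt (G.weights c') (G.weights c))

/-- Breadth-first delegation: the selected chain is minimal for `BFLt`. -/
def BFSelect (G : DelGraph V) (i : V) (c : List V) : Prop :=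
  G.IsChain i c ∧ ∀ c', G.IsChain i c' → ¬ G.BFLt c' c

/-- `j` is the guru assigned to `i` by the breadth-first delegation rule. -/
def BFGuru (G : DelGraph V) (i j : V) : Prop :=
  ∃ c, G.BFSelect i c ∧ c.getLast? = some j

/-- The delegation graph has no directed cycle. -/
def Acyclic (G : DelGraph V) : Prop :=
  ∀ v, ¬ Relation.TransGen G.Edge v v

/-- `G'` is obtained from `G` when the previously abstaining voter `j` joins
the delegating electorate (adding `j`'s outgoing edges). -/
def Joins (G G' : DelGraph V) (j : V) : Prop :=
  ¬ G.deleg j ∧ ¬ G.cast j ∧ (∀ b, G.weight j b = none) ∧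
    (∀ v, G'.cast v ↔ G.cast v) ∧ (∀ v, G'.deleg v ↔ G.deleg v ∨ v = j) ∧
    (∀ a b, a ≠ j → G'.weight a b = G.weight a b)

/-- `G'` is obtained from `G` by removing the delegating voter `j` (she now
abstains): node `j` and all incident edges are deleted. -/
def Removes (G G' : DelGraph V) (j : V) : Prop :=
  (∀ v, G'.cast v ↔ G.cast v) ∧ (∀ v, G'.deleg v ↔ G.deleg v ∧ v ≠ j) ∧
    (∀ a b, (a = j ∨ b = j) → G'.weight a b = none) ∧
    (∀ a b, a ≠ j → b ≠ j → G'.weight a b = G.weight a b)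

end DelGraph

section Aux
variable {V : Type}

lemma weights_cons (G : DelGraph V) (x y : V) (t : List V) :
    G.weights (x :: y :: t) = (G.weight x y).getD 0 :: G.weights (y :: t) := rfl

lemma weights_append (G : DelGraph V) :
    ∀ (a : List V) (j : V) (u : List V),
      G.weights (a ++ j :: u) = G.weights (a ++ [j]) ++ G.weights (j :: u)
  | [], j, u => by simp [DelGraph.weights]
  | [x], j, u => by simp [DelGraph.weights]
  | x :: y :: t, j, u => by
    have ih := weights_append G (y :: t) j u
    simp only [List.cons_append] at ih ⊢
    rw [weights_cons, weights_cons, ih, List.cons_append]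

lemma lexlt_append (w : List ℕ) {u v : List ℕ} (h : DelGraph.LexLt u v) :
    DelGraph.LexLt (w ++ u) (w ++ v) := by
  induction w with
  | nil => simpa using h
  | cons x t ih => exact List.Lex.cons ih

lemma exists_first_shared {α : Type} (c : List α) :
    ∀ (pre : List α), (∃ x ∈ pre, x ∈ c) →
      ∃ p1 v p2, pre = p1 ++ v :: p2 ∧ v ∈ c ∧ ∀ x ∈ p1, x ∉ c := by
  intro pre
  induction pre with
  | nil => simp
  | cons x t ih =>
    intro h
    by_cases hx : x ∈ c
    · exact ⟨[], x, t, rfl, hx, by simp⟩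
    · obtain ⟨y, hy, hyc⟩ := h
      rcases List.mem_cons.mp hy with rfl | hy
      · exact absurd hyc hx
      · obtain ⟨p1, v, p2, rfl, hv, hp1⟩ := ih ⟨y, hy, hyc⟩
        refine ⟨x :: p1, v, p2, rfl, hv, ?_⟩
        intro z hz
        rcases List.mem_cons.mp hz with rfl | hz
        · exact hx
        · exact hp1 z hz

end Aux


/-- under breadth-first delegation, if `k` is assigned her guru
through a chain containing the delegating voter `j`, then `k` is assigned the
same guru as `j`. -/
theorem stmt2 {V : Type} (G : DelGraph V) (k j l : V) (c : List V)
    (hsel : G.BFSelect k c) (hlast : c.getLast? = some l)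
    (hj : j ∈ c) (hjd : G.deleg j) :
    G.BFGuru j l := by
  classical
  obtain ⟨hc, hmin⟩ := hsel
  obtain ⟨pre, rest, rfl⟩ := List.append_of_mem hj
  obtain ⟨hhead, hkdel, hnodup, hchain, l', hl', hcast⟩ := hc
  rw [hlast] at hl'
  have hcastl : G.cast l := ((Option.some.inj hl').symm ▸ hcast : G.cast l)
  have hlast_s : (j :: rest).getLast? = some l := by
    rw [← hlast, List.getLast?_append_cons]
  rw [List.Chain', List.isChain_append] at hchain
  rw [List.nodup_append] at hnodup
  have hchain_s : G.IsChain j (j :: rest) :=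
    ⟨rfl, hjd, hnodup.2.1, hchain.2.1, l, hlast_s, hcastl⟩
  refine ⟨j :: rest, ⟨hchain_s, ?_⟩, hlast_s⟩
  intro c'' hc'' hlt
  obtain ⟨hh'', hjd'', hnd'', hch'', m, hm'', hcastm⟩ := hc''
  obtain ⟨u, rfl⟩ : ∃ u, c'' = j :: u := by
    cases c'' with
    | nil => simp at hh''
    | cons a t =>
      obtain rfl : a = j := by simpa using hh''
      exact ⟨t, rfl⟩
  have hlen : u.length ≤ rest.length := by
    rcases hlt with h | ⟨h, _⟩ <;> simp at h <;> omega
  by_cases hshare : ∃ x ∈ pre, x ∈ (j :: u)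
  · -- first shared element
    obtain ⟨p1, v, p2, rfl, hvc, hp1⟩ := exists_first_shared _ pre hshare
    obtain ⟨q1, q2, hq⟩ := List.append_of_mem hvc
    rw [hq] at hnd'' hch'' hm''
    rw [List.nodup_append] at hnd''
    have hq2len : q2.length ≤ u.length := by
      have := congrArg List.length hq
      simp at this; omega
    refine hmin (p1 ++ v :: q2) ⟨?_, hkdel, ?_, ?_, m, ?_, hcastm⟩ (Or.inl ?_)
    · cases p1 <;> simpa using hhead
    · rw [List.nodup_append']
      have hnvq2 : (v :: q2).Nodup := hnd''.2.1
      refine ⟨(List.nodup_append.mp hnodup.1).1, hnvq2, ?_⟩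
      intro a ha hb
      refine hp1 a ha ?_
      rw [hq]
      exact List.mem_append.mpr (Or.inr hb)
    · rw [List.Chain', List.isChain_append]
      have h1 := List.isChain_append.mp hchain.1
      refine ⟨h1.1, (List.isChain_append.mp hch'').2.1, ?_⟩
      intro x hx y hy
      simp only [List.head?_cons, Option.mem_def, Option.some.injEq] at hy
      subst hy
      exact h1.2.2 x hx v (by simp)
    · rw [List.getLast?_append_cons, ← List.getLast?_append_cons q1]
      exact hm''
    · simp
      omega
  · -- disjoint: pre ++ j :: u is a chain for k
    refine hmin (pre ++ j :: u) ⟨?_, hkdel, ?_, ?_, m, ?_, hcastm⟩ ?_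
    · cases pre <;> simpa using hhead
    · rw [List.nodup_append']
      exact ⟨hnodup.1, hnd'', fun a ha hb => hshare ⟨a, ha, hb⟩⟩
    · rw [List.Chain', List.isChain_append]
      refine ⟨hchain.1, hch'', ?_⟩
      intro x hx y hy
      simp only [List.head?_cons, Option.mem_def, Option.some.injEq] at hy
      subst hy
      exact hchain.2.2 x hx j (by simp)
    · rw [List.getLast?_append_cons]; exact hm''
    · rcases hlt with h | ⟨h, hlex⟩
      · exact Or.inl (by simp at h ⊢; omega)
      · refine Or.inr ⟨by simp at h ⊢; omega, ?_⟩
        rw [weights_append G pre j u, weights_append G pre j rest]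
        exact lexlt_append _ hlex
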